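/- arXiv:2010.09216 — 2 statements merged into one kernel-verified Lean document; each statement's English description precedes it below -/
import Mathlib

section
/- Let C and D be objects of a symmetric monoidal category M, each equipped with duality data (C⋆, η_C, ε_C) and (D⋆, η_D, ε_D) satisfying the zig-zag identities. If a morphism g : C⋆ ⟶ D⋆ respects a morphism f : C ⟶ D (i.e., (g ⊗ f) ≫ ε_D = ε_C and η_C ≫ (f ⊗ g) = η_D), then both f and g are isomorphisms. -/
/-!
STATEMENT 1 (Lemma `respect`, second part):
In a symmetric monoidal category `M`, given duality data `(C, Cs, η_C, ε_C)` and
`(D, Ds, η_D, ε_D)` satisfying the zig-zag identities (encoded by `ExactPairing C Cs`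
and `ExactPairing D Ds`), if a morphism `g : Cs ⟶ Ds` respects a morphism `f : C ⟶ D`,
i.e. `(g ⊗ f) ≫ ε_D = ε_C` and `η_C ≫ (f ⊗ g) = η_D`, then both `f` and `g`
are isomorphisms.
-/

open CategoryTheory MonoidalCategory

theorem respects_implies_isos
    {M : Type*} [Category M] [MonoidalCategory M] [SymmetricCategory M]
    (C Cs D Ds : M) [ExactPairing C Cs] [ExactPairing D Ds]
    (f : C ⟶ D) (g : Cs ⟶ Ds)
    (h₁ : (g ⊗ₘ f) ≫ ε_ D Ds = ε_ C Cs)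
    (h₂ : η_ C Cs ≫ (f ⊗ₘ g) = η_ D Ds) :
    IsIso f ∧ IsIso g := by
  set f' : D ⟶ C :=
    (λ_ D).inv ≫ (η_ C Cs ▷ D) ≫ (α_ C Cs D).hom ≫ (C ◁ (g ▷ D)) ≫ (C ◁ ε_ D Ds) ≫ (ρ_ C).hom
    with hf'
  set g' : Ds ⟶ Cs :=
    (ρ_ Ds).inv ≫ (Ds ◁ η_ C Cs) ≫ (α_ Ds C Cs).inv ≫ ((Ds ◁ f) ▷ Cs) ≫ (ε_ D Ds ▷ Cs) ≫ (λ_ Cs).hom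
    with hg'
  have hf1 : f ≫ f' = 𝟙 C := by
    rw [hf', leftUnitor_inv_naturality_assoc, whisker_exchange_assoc,
      associator_naturality_right_assoc, ← MonoidalCategory.whiskerLeft_comp_assoc,
      ← tensorHom_def', ← MonoidalCategory.whiskerLeft_comp_assoc, h₁,
      ExactPairing.evaluation_coevaluation_assoc]
    simp
  have hf2 : f' ≫ f = 𝟙 D := by
    rw [hf']
    simp only [Category.assoc]
    rw [← rightUnitor_naturality, whisker_exchange_assoc, whisker_exchange_assoc,
      ← associator_naturality_left_assoc, ← comp_whiskerRight_assoc,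
      ← associator_naturality_middle_assoc, ← comp_whiskerRight_assoc]
    simp only [Category.assoc]
    rw [← MonoidalCategory.tensorHom_def, h₂, ExactPairing.evaluation_coevaluation_assoc]
    simp
  have hg1 : g ≫ g' = 𝟙 Cs := by
    rw [hg', rightUnitor_inv_naturality_assoc, ← whisker_exchange_assoc,
      associator_inv_naturality_left_assoc, ← comp_whiskerRight_assoc, ← comp_whiskerRight_assoc,
      ← MonoidalCategory.tensorHom_def, h₁, ExactPairing.coevaluation_evaluation_assoc]
    simp
  have hg2 : g' ≫ g = 𝟙 Ds := by
    rw [hg']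
    simp only [Category.assoc]
    rw [← leftUnitor_naturality, ← whisker_exchange_assoc, ← whisker_exchange_assoc,
      ← associator_inv_naturality_right_assoc, ← associator_inv_naturality_middle_assoc]
    simp only [← MonoidalCategory.whiskerLeft_comp_assoc, Category.assoc]
    rw [← tensorHom_def', h₂, ExactPairing.coevaluation_evaluation_assoc]
    simp
  exact ⟨⟨f', hf1, hf2⟩, ⟨g', hg1, hg2⟩⟩
end

section
/- Let B be a compact closed symmetric monoidal category with a distinguished object U which is freely generated by U in the following sense: (existence) for every compact closed symmetric monoidal category C and every object c of C there exists a strong symmetric monoidal functor F : B ⥤ C with F(U) = c; (uniqueness) for any compact closed symmetric monoidal category C and strong symmetric monoidal functors F, G : B ⥤ C with F(U) = G(U), there exists a unique monoidal natural isomorphism α : F ⟹ G with α_U = 1_{F(U)}. Then for any compact closed symmetric monoidal category C, any strong symmetric monoidal functors F, G : B ⥤ C, and any isomorphism f : F(U) ⟶ G(U) in C, there exists a unique monoidal natural isomorphism α : F ⟹ G with α_U = f. -/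
/-!
STATEMENT 7 (part of Proposition `1-D-CH`):
Let `B` be a compact closed symmetric monoidal category with a distinguished object
`U`, freely generated by `U`: (existence) for every compact closed symmetric monoidal
category `C` and every object `c : C` there is a strong symmetric monoidal functor
`F : B ⥤ C` with `F(U) = c`; (uniqueness) for strong symmetric monoidal functors
`F, G : B ⥤ C` with `F(U) = G(U)` there is a unique monoidal natural isomorphism
`α : F ⟹ G` with `α_U = 1`. Then for any compact closed symmetric monoidal category
`C`, strong symmetric monoidal functors `F, G : B ⥤ C`, and isomorphism
`f : F(U) ≅ G(U)`, there is a unique monoidal natural isomorphism `α : F ⟹ G`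
with `α_U = f`.
-/

open CategoryTheory MonoidalCategory

universe v₁ u₁ v₂ u₂

section Aux

variable {C : Type u₂} [Category.{v₂} C] [MonoidalCategory C]

/-- The functor obtained by conjugating the identity functor by a family of
isomorphisms `φ X : X ≅ s X`. -/
@[simps, reducible]
def shiftFun (s : C → C) (φ : ∀ X : C, X ≅ s X) : C ⥤ C where
  obj := s
  map {X Y} u := (φ X).inv ≫ u ≫ (φ Y).hom
  map_id X := by simp
  map_comp u v := by simp

/-- The core monoidal structure on `shiftFun s φ`. -/
@[simps]
def shiftFunCore (s : C → C) (φ : ∀ X : C, X ≅ s X) : (shiftFun s φ).CoreMonoidal where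
  εIso := φ (𝟙_ C)
  μIso X Y :=
    { hom := ((φ X).inv ⊗ₘ (φ Y).inv) ≫ (φ (X ⊗ Y)).hom
      inv := (φ (X ⊗ Y)).inv ≫ ((φ X).hom ⊗ₘ (φ Y).hom)
      hom_inv_id := by
        simp [tensorHom_comp_tensorHom]
      inv_hom_id := by
        simp [tensorHom_comp_tensorHom_assoc] }
  μIso_hom_natural_left u X' := by
    simp [MonoidalCategory.tensorHom_def, whisker_exchange, whisker_exchange_assoc]
  μIso_hom_natural_right X' u := by
    simp [tensorHom_def', whisker_exchange, whisker_exchange_assoc]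
  associativity X Y Z := by
    simp [MonoidalCategory.tensorHom_def, whisker_exchange, whisker_exchange_assoc]
    rw [associator_naturality_left_assoc, associator_naturality_left_assoc,
      Iso.inv_hom_id_assoc]
    simp only [← whisker_exchange_assoc]
  left_unitality X := by
    simp [MonoidalCategory.tensorHom_def, whisker_exchange, whisker_exchange_assoc]
  right_unitality X := by
    simp [MonoidalCategory.tensorHom_def, whisker_exchange, whisker_exchange_assoc]

instance shiftFunMonoidal (s : C → C) (φ : ∀ X : C, X ≅ s X) : (shiftFun s φ).Monoidal :=
  (shiftFunCore s φ).toMonoidal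

lemma shiftFun_ε (s : C → C) (φ : ∀ X : C, X ≅ s X) :
    Functor.LaxMonoidal.ε (shiftFun s φ) = (φ (𝟙_ C)).hom := rfl

lemma shiftFun_μ (s : C → C) (φ : ∀ X : C, X ≅ s X) (X Y : C) :
    Functor.LaxMonoidal.μ (shiftFun s φ) X Y =
      ((φ X).inv ⊗ₘ (φ Y).inv) ≫ (φ (X ⊗ Y)).hom := rfl

instance shiftFunBraided [BraidedCategory C] (s : C → C) (φ : ∀ X : C, X ≅ s X) :
    (shiftFun s φ).Braided where
  braided X Y := by
    simp [shiftFun_μ]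

/-- The tautological natural transformation from the identity to `shiftFun s φ`. -/
@[simps]
def shiftNat (s : C → C) (φ : ∀ X : C, X ≅ s X) : 𝟭 C ⟶ shiftFun s φ where
  app X := (φ X).hom
  naturality X Y u := by simp

instance shiftNatMonoidal (s : C → C) (φ : ∀ X : C, X ≅ s X) :
    NatTrans.IsMonoidal (shiftNat s φ) where
  unit := by
    simp [shiftFun_ε]
  tensor X Y := by
    simp [shiftFun_μ, tensorHom_comp_tensorHom_assoc]

instance shiftNatIso (s : C → C) (φ : ∀ X : C, X ≅ s X) : IsIso (shiftNat s φ) := by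
  have : ∀ X, IsIso ((shiftNat s φ).app X) := fun X => by
    dsimp; exact (inferInstance : IsIso (φ X).hom)
  apply NatIso.isIso_of_isIso_app

open Classical in
/-- The swap-at-a-point object function. -/
noncomputable def sObj (a b : C) (X : C) : C := if X = a then b else X

open Classical in
/-- The swap-at-a-point isomorphism family. -/
noncomputable def sIso (a b : C) (g : a ≅ b) (X : C) : X ≅ sObj a b X :=
  if h : X = a then eqToIso h ≪≫ g ≪≫ eqToIso (by simp [sObj, h])
  else eqToIso (by simp [sObj, h])

end Aux

theorem free_compact_closed_unique_monoidal_nat_iso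
    {B : Type u₁} [Category.{v₁} B] [MonoidalCategory B] [SymmetricCategory B]
    (hB : ∀ X : B, ∃ Xd : B, Nonempty (ExactPairing X Xd)) (U : B)
    (hex : ∀ (C : Type u₂) [Category.{v₂} C] [MonoidalCategory C] [SymmetricCategory C],
      (∀ X : C, ∃ Xd : C, Nonempty (ExactPairing X Xd)) →
      ∀ c : C, ∃ (F : B ⥤ C) (_ : F.Braided), F.obj U = c)
    (huniq : ∀ (C : Type u₂) [Category.{v₂} C] [MonoidalCategory C] [SymmetricCategory C],
      (∀ X : C, ∃ Xd : C, Nonempty (ExactPairing X Xd)) →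
      ∀ (F G : B ⥤ C) [F.Braided] [G.Braided] (h : F.obj U = G.obj U),
        ∃! α : F ⟶ G, NatTrans.IsMonoidal α ∧ IsIso α ∧ α.app U = eqToHom h)
    (C : Type u₂) [Category.{v₂} C] [MonoidalCategory C] [SymmetricCategory C]
    (hC : ∀ X : C, ∃ Xd : C, Nonempty (ExactPairing X Xd))
    (F G : B ⥤ C) [F.Braided] [G.Braided] (f : F.obj U ≅ G.obj U) :
    ∃! α : F ⟶ G, NatTrans.IsMonoidal α ∧ IsIso α ∧ α.app U = f.hom := by
  classical
  let s : C → C := sObj (F.obj U) (G.obj U)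
  let φ : ∀ X : C, X ≅ s X := sIso (F.obj U) (G.obj U) f
  let S : C ⥤ C := shiftFun s φ
  have hS : (F ⋙ S).obj U = G.obj U := by
    simp [S, shiftFun, s, sObj]
  obtain ⟨β, ⟨hβmon, hβiso, hβU⟩, hβuniq⟩ := huniq C hC (F ⋙ S) G hS
  let w : F ⟶ F ⋙ S := F.rightUnitor.inv ≫ (𝟙 F ◫ shiftNat s φ)
  haveI : NatTrans.IsMonoidal w := by
    dsimp only [w]; infer_instance
  haveI : ∀ X, IsIso (w.app X) := by
    intro X
    dsimp [w]
    rw [Category.id_comp, NatTrans.id_hcomp_app]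
    exact (inferInstance : IsIso (φ (F.obj X)).hom)
  haveI : IsIso w := NatIso.isIso_of_isIso_app w
  have hwU : w.app U = f.hom ≫ eqToHom hS.symm := by
    simp [w, NatTrans.id_hcomp_app, shiftNat, φ, sIso, S, shiftFun]
  have hP : NatTrans.IsMonoidal (w ≫ β) ∧ IsIso (w ≫ β) ∧ (w ≫ β).app U = f.hom := by
    refine ⟨by haveI := hβmon; infer_instance, by haveI := hβiso; infer_instance, ?_⟩
    rw [NatTrans.comp_app, hwU, hβU]
    simp
  refine ⟨w ≫ β, hP, ?_⟩
  intro α' ⟨h1, h2, h3⟩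
  obtain ⟨γ, -, hγuniq⟩ := huniq C hC G G rfl
  haveI := hP.1
  haveI := hP.2.1
  haveI := h1
  haveI := h2
  haveI : NatTrans.IsMonoidal (asIso (w ≫ β)).hom := hP.1
  haveI : NatTrans.IsMonoidal (inv (w ≫ β)) :=
    inferInstanceAs (NatTrans.IsMonoidal (asIso (w ≫ β)).inv)
  have hinv : inv ((w ≫ β).app U) = f.inv := by
    apply IsIso.inv_eq_of_hom_inv_id
    rw [hP.2.2]
    simp
  have e1 : inv (w ≫ β) ≫ α' = γ := by
    apply hγuniq
    refine ⟨inferInstance, inferInstance, ?_⟩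
    rw [NatTrans.comp_app, NatIso.isIso_inv_app, hinv, h3]
    simp
  have e2 : 𝟙 G = γ := by
    apply hγuniq
    exact ⟨inferInstance, inferInstance, by simp⟩
  have : inv (w ≫ β) ≫ α' = 𝟙 G := e1.trans e2.symm
  calc α' = (w ≫ β) ≫ inv (w ≫ β) ≫ α' := by simp
    _ = w ≫ β := by rw [this]; simp
end
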